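/- Let k ≥ 2, let h_1, …, h_k : ℝ → ℝ be C² functions, and define H : ℝ^k → ℝ by H(y) = ∏_{i=1}^k h_i(y_i). Let β, ξ ⊂ {1,…,k} be ordered multi-indices of the same length ρ such that |β ∩ ξ| ≤ ρ − 2. Then det( (∂_s ∂_t H)_{s ∈ β, t ∈ ξ} ) = 0 identically on ℝ^k. -/

import Mathlib

open MeasureTheory Filter Topology Finset

noncomputable section

/-- Euclidean `n`-space. -/
abbrev Eu (n : ℕ) : Type := EuclideanSpace ℝ (Fin n)

/-- The partial derivative `∂ᵢ u`. -/
noncomputable def pd {n : ℕ} (i : Fin n) (u : Eu n → ℝ) : Eu n → ℝ :=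
  fun x => fderiv ℝ u x (EuclideanSpace.single i 1)

/-- The second partial derivative `∂ᵢ∂ⱼ u`. -/
noncomputable def pd2 {n : ℕ} (i j : Fin n) (u : Eu n → ℝ) : Eu n → ℝ :=
  pd i (pd j u)

/-- The Hessian matrix `D²u` of `u`. -/
noncomputable def hess {n : ℕ} (u : Eu n → ℝ) (x : Eu n) : Matrix (Fin n) (Fin n) ℝ :=
  Matrix.of fun i j => pd2 i j u x

/-- The minor `M_r^c(A)`: the determinant of the submatrix of `A` with rows `r` and
columns `c` (both taken in increasing order); `0` if the cardinalities differ. -/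
noncomputable def minor {N : ℕ} (A : Matrix (Fin N) (Fin N) ℝ) (r c : Finset (Fin N)) : ℝ :=
  if h : c.card = r.card then
    (Matrix.of fun i j : Fin r.card =>
      A ((r.orderIsoOfFin rfl i : Fin N)) ((c.orderIsoOfFin h j : Fin N))).det
  else 0

/-- The `k`-Hessian `F_k[u] = ∑_{α ∈ I(k,n)} M_α^α(D²u)`. -/
noncomputable def fkH {n : ℕ} (k : ℕ) (u : Eu n → ℝ) (x : Eu n) : ℝ :=
  ∑ s ∈ Finset.univ.filter (fun s : Finset (Fin n) => s.card = k), minor (hess u x) s s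

/-! ### Auxiliary lemmas -/

lemma aux_proj_single {k : ℕ} (i j : Fin k) :
    (EuclideanSpace.proj (𝕜 := ℝ) i) (EuclideanSpace.single j (1:ℝ)) = if i = j then 1 else 0 := by
  show (EuclideanSpace.single j (1:ℝ)) i = _
  rw [EuclideanSpace.single_apply]

lemma aux_hasFDerivAt_prodFun {k : ℕ} (h : Fin k → ℝ → ℝ) (hh : ∀ i, Differentiable ℝ (h i))
    (S : Finset (Fin k)) (x : Eu k) :
    HasFDerivAt (fun z : Eu k => ∏ i ∈ S, h i (z i))
      (∑ i ∈ S, (∏ j ∈ S.erase i, h j (x j)) •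
        ((deriv (h i) (x i)) • (EuclideanSpace.proj i : Eu k →L[ℝ] ℝ))) x := by
  refine HasFDerivAt.finset_prod fun i _ => ?_
  have hp : HasFDerivAt (fun z : Eu k => z i) (EuclideanSpace.proj (𝕜 := ℝ) i) x :=
    (EuclideanSpace.proj (𝕜 := ℝ) i).hasFDerivAt
  exact ((hh i (x i)).hasDerivAt).comp_hasFDerivAt x hp

lemma aux_pd_prodFun {k : ℕ} (h : Fin k → ℝ → ℝ) (hh : ∀ i, Differentiable ℝ (h i))
    (S : Finset (Fin k)) (j : Fin k) (x : Eu k) :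
    pd j (fun z : Eu k => ∏ i ∈ S, h i (z i)) x =
      if j ∈ S then deriv (h j) (x j) * ∏ i ∈ S.erase j, h i (x i) else 0 := by
  have := (aux_hasFDerivAt_prodFun h hh S x).fderiv
  simp only [pd, this, ContinuousLinearMap.sum_apply, ContinuousLinearMap.smul_apply,
    aux_proj_single, smul_eq_mul]
  rw [Finset.sum_congr rfl (fun i hi => ?_), Finset.sum_ite_eq' S j
    (fun _ => deriv (h j) (x j) * ∏ l ∈ S.erase j, h l (x l))]
  by_cases hij : i = j
  · subst hij; simp; ring
  · simp [hij, Ne.symm hij]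

lemma aux_pd2_prodFun {k : ℕ} (h : Fin k → ℝ → ℝ) (hh : ∀ i, ContDiff ℝ 2 (h i))
    (s t : Fin k) (hst : s ≠ t) (x : Eu k) :
    pd2 s t (fun z : Eu k => ∏ i, h i (z i)) x =
      deriv (h t) (x t) *
        (deriv (h s) (x s) * ∏ i ∈ (Finset.univ.erase t).erase s, h i (x i)) := by
  have hd1 : ∀ i, Differentiable ℝ (h i) := fun i => (hh i).differentiable two_ne_zero
  have hd2 : ∀ i, Differentiable ℝ (deriv (h i)) := by
    intro i
    have h2 : ContDiff ℝ (1 + 1 : WithTop ℕ∞) (h i) := by norm_num; exact hh i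
    exact ((contDiff_succ_iff_deriv.mp h2).2.2).differentiable one_ne_zero
  have hpdt : pd t (fun z : Eu k => ∏ i, h i (z i)) =
      fun x : Eu k => deriv (h t) (x t) * ∏ i ∈ Finset.univ.erase t, h i (x i) := by
    funext z
    rw [aux_pd_prodFun h hd1 Finset.univ t z, if_pos (Finset.mem_univ t)]
  rw [pd2, hpdt]
  have hc : HasFDerivAt (fun z : Eu k => deriv (h t) (z t))
      ((deriv (deriv (h t)) (x t)) • (EuclideanSpace.proj t : Eu k →L[ℝ] ℝ)) x :=
    by
      have hp : HasFDerivAt (fun z : Eu k => z t) (EuclideanSpace.proj (𝕜 := ℝ) t) x :=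
        (EuclideanSpace.proj (𝕜 := ℝ) t).hasFDerivAt
      exact ((hd2 t (x t)).hasDerivAt).comp_hasFDerivAt x hp
  have hd : HasFDerivAt (fun z : Eu k => ∏ i ∈ Finset.univ.erase t, h i (z i))
      (∑ i ∈ Finset.univ.erase t, (∏ j ∈ (Finset.univ.erase t).erase i, h j (x j)) •
        ((deriv (h i) (x i)) • (EuclideanSpace.proj i : Eu k →L[ℝ] ℝ))) x :=
    aux_hasFDerivAt_prodFun h hd1 _ x
  have hmul := (hc.fun_mul hd).fderiv
  rw [pd, hmul]
  simp only [ContinuousLinearMap.add_apply, ContinuousLinearMap.smul_apply,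
    ContinuousLinearMap.sum_apply, aux_proj_single, smul_eq_mul]
  rw [if_neg (Ne.symm hst)]
  have : ∀ i ∈ Finset.univ.erase t,
      (∏ j ∈ (Finset.univ.erase t).erase i, h j (x j)) *
        (deriv (h i) (x i) * if i = s then 1 else 0)
      = if i = s then deriv (h s) (x s) * ∏ j ∈ (Finset.univ.erase t).erase s, h j (x j)
        else 0 := by
    intro i hi
    by_cases his : i = s
    · subst his; simp; ring
    · simp [his]
  rw [Finset.sum_congr rfl this, Finset.sum_ite_eq' (Finset.univ.erase t) s]
  rw [if_pos (Finset.mem_erase.mpr ⟨hst, Finset.mem_univ s⟩)]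
  ring

lemma aux_set_split {k : ℕ} {ξ : Finset (Fin k)} {s t : Fin k} (hs : s ∉ ξ) (ht : t ∈ ξ) :
    (Finset.univ.erase t).erase s = ξ.erase t ∪ ξᶜ.erase s := by
  ext i
  simp only [Finset.mem_erase, Finset.mem_union, Finset.mem_compl, Finset.mem_univ, and_true]
  constructor
  · rintro ⟨his, hit⟩
    by_cases hiξ : i ∈ ξ
    · exact Or.inl ⟨hit, hiξ⟩
    · exact Or.inr ⟨his, hiξ⟩
  · rintro (⟨hit, hiξ⟩ | ⟨his, hiξ⟩)
    · exact ⟨fun e => hs (e ▸ hiξ), hit⟩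
    · exact ⟨his, fun e => hiξ (e ▸ ht)⟩

/-- If `s ∉ ξ` and `t ∈ ξ` then `∂ₛ∂ₜ H` factors as a product of a function of `s`
and a function of `t`. -/
lemma aux_pd2_factor {k : ℕ} (h : Fin k → ℝ → ℝ) (hh : ∀ i, ContDiff ℝ 2 (h i))
    (ξ : Finset (Fin k)) (s t : Fin k) (hs : s ∉ ξ) (ht : t ∈ ξ) (y : Eu k) :
    pd2 s t (fun z : Eu k => ∏ i, h i (z i)) y =
      (deriv (h s) (y s) * ∏ i ∈ ξᶜ.erase s, h i (y i)) *
        (deriv (h t) (y t) * ∏ i ∈ ξ.erase t, h i (y i)) := by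
  have hst : s ≠ t := fun e => hs (e ▸ ht)
  rw [aux_pd2_prodFun h hh s t hst y, aux_set_split hs ht,
    Finset.prod_union (disjoint_compl_right.mono (Finset.erase_subset _ _)
      (Finset.erase_subset _ _))]
  ring

lemma aux_det_zero_of_two_rows {n : ℕ} (M : Matrix (Fin n) (Fin n) ℝ) (a b : Fin n) (hab : a ≠ b)
    (ca cb : ℝ) (v : Fin n → ℝ) (ha : M a = ca • v) (hb : M b = cb • v) : M.det = 0 := by
  have h1 : M = M.updateRow b (cb • v) := by rw [← hb, Matrix.updateRow_eq_self]
  rw [h1, Matrix.det_updateRow_smul]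
  have hNa : (M.updateRow b v) a = ca • v := by
    rw [Matrix.updateRow_ne hab, ha]
  have h2 : M.updateRow b v = (M.updateRow b v).updateRow a (ca • v) := by
    rw [← hNa, Matrix.updateRow_eq_self]
  rw [h2, Matrix.det_updateRow_smul]
  have : ((M.updateRow b v).updateRow a v) a = ((M.updateRow b v).updateRow a v) b := by
    rw [Matrix.updateRow_self, Matrix.updateRow_ne (Ne.symm hab), Matrix.updateRow_self]
  rw [Matrix.det_zero_of_row_eq hab this]
  ring

theorem stmt18 (k : ℕ) (hk : 2 ≤ k)
    (h : Fin k → ℝ → ℝ) (hh : ∀ i, ContDiff ℝ 2 (h i))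
    (ρ : ℕ) (β ξ : Finset (Fin k)) (hβ : β.card = ρ) (hξ : ξ.card = ρ)
    (hint : ((β ∩ ξ).card : ℤ) ≤ (ρ : ℤ) - 2) :
    ∀ y : Eu k, minor (hess (fun z : Eu k => ∏ i, h i (z i)) y) β ξ = 0 := by
  intro y
  have hcard : ξ.card = β.card := hξ.trans hβ.symm
  rw [minor, dif_pos hcard]
  -- find two distinct elements of β \ ξ
  have hsd : 1 < (β \ ξ).card := by
    have := Finset.card_sdiff_add_card_inter β ξ
    omega
  obtain ⟨s₁, hs₁, s₂, hs₂, hne⟩ := Finset.one_lt_card.mp hsd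
  obtain ⟨hs₁β, hs₁ξ⟩ := Finset.mem_sdiff.mp hs₁
  obtain ⟨hs₂β, hs₂ξ⟩ := Finset.mem_sdiff.mp hs₂
  set e := β.orderIsoOfFin (rfl : β.card = β.card) with he
  set f := ξ.orderIsoOfFin hcard with hf
  set a : Fin β.card := e.symm ⟨s₁, hs₁β⟩ with hadef
  set b : Fin β.card := e.symm ⟨s₂, hs₂β⟩ with hbdef
  have hab : a ≠ b := by
    intro hab
    apply hne
    have : (⟨s₁, hs₁β⟩ : {x // x ∈ β}) = ⟨s₂, hs₂β⟩ := by
      rw [← e.apply_symm_apply ⟨s₁, hs₁β⟩, ← e.apply_symm_apply ⟨s₂, hs₂β⟩, ← hadef, ← hbdef, hab]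
    exact congrArg Subtype.val this
  have hea : (e a : Fin k) = s₁ := by rw [hadef, e.apply_symm_apply]
  have heb : (e b : Fin k) = s₂ := by rw [hbdef, e.apply_symm_apply]
  set v : Fin β.card → ℝ := fun j =>
    deriv (h (f j)) (y (f j)) * ∏ i ∈ ξ.erase (f j), h i (y i) with hv
  set ca : ℝ := deriv (h s₁) (y s₁) * ∏ i ∈ ξᶜ.erase s₁, h i (y i) with hca
  set cb : ℝ := deriv (h s₂) (y s₂) * ∏ i ∈ ξᶜ.erase s₂, h i (y i) with hcb
  refine aux_det_zero_of_two_rows _ a b hab ca cb v ?_ ?_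
  · funext j
    show pd2 (e a : Fin k) (f j : Fin k) (fun z : Eu k => ∏ i, h i (z i)) y = ca * v j
    rw [hea, aux_pd2_factor h hh ξ s₁ (f j) hs₁ξ (f j).2 y]
  · funext j
    show pd2 (e b : Fin k) (f j : Fin k) (fun z : Eu k => ∏ i, h i (z i)) y = cb * v j
    rw [heb, aux_pd2_factor h hh ξ s₂ (f j) hs₂ξ (f j).2 y]

end
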